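/- Let q = (q_0, ..., q_5) ∈ ℤ^6 satisfy the Bazaikin freeness condition. Then 5 divides σ_3(q) if and only if there exist ε ∈ {1, 2} and a sign δ ∈ {+1, −1} such that, up to reordering, δq ≡ (ε, ε, ε, ε, ε, 0) (mod 5). (Equivalently: the order s with 8s = |σ_3(q)| satisfies s ≡ 0 mod 5 if and only if q mod 5 = ±(ε,ε,ε,ε,ε,0) up to order.) -/
import Mathlib

/-- The `k`-th elementary symmetric polynomial of the tuple `q`. -/
def esymm {n : ℕ} (k : ℕ) (q : Fin n → ℤ) : ℤ :=
  ∑ t ∈ Finset.univ.powersetCard k, ∏ i ∈ t, q i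

/-- The Bazaikin freeness condition: the entries sum to zero, all entries are odd,
and `gcd (q a + q b, q c + q d) = 2` for all pairwise distinct indices `a b c d`. -/
def BazaikinFree (q : Fin 6 → ℤ) : Prop :=
  (∑ i, q i) = 0 ∧ (∀ i, Odd (q i)) ∧
    ∀ a b c d : Fin 6, a ≠ b → a ≠ c → a ≠ d → b ≠ c → b ≠ d → c ≠ d →
      Int.gcd (q a + q b) (q c + q d) = 2

/-- The positive curvature condition: there is an index `i₀` such that
`q i + q j > 0` for all pairs `i < j` avoiding `i₀`, or `q i + q j < 0` for all such pairs. -/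
def PosCurv (q : Fin 6 → ℤ) : Prop :=
  ∃ i₀ : Fin 6,
    (∀ i j : Fin 6, i < j → i ≠ i₀ → j ≠ i₀ → 0 < q i + q j) ∨
    (∀ i j : Fin 6, i < j → i ≠ i₀ → j ≠ i₀ → q i + q j < 0)

lemma bz_mod5_eq_iff (m k : ℕ) (hk : k < 5) : m % 5 = k ↔ ((m : ZMod 5) = (k : ZMod 5)) := by
  rw [ZMod.natCast_eq_natCast_iff, Nat.ModEq, Nat.mod_eq_of_lt hk]

lemma bz_mod5_zero (m : ℕ) : m % 5 = 0 ↔ ((m : ZMod 5) = 0) := by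
  simpa using bz_mod5_eq_iff m 0 (by norm_num)

lemma bz_val_cast (x : ZMod 5) : ((x.val : ℕ) : ZMod 5) = x := ZMod.natCast_rightInverse x

lemma bz_pair (x y z w : ZMod 5) (h : ¬(x + y = 0 ∧ z + w = 0)) :
    ¬((x.val + y.val) % 5 = 0 ∧ (z.val + w.val) % 5 = 0) := by
  rw [bz_mod5_zero, bz_mod5_zero]
  push_cast [bz_val_cast]
  exact h

lemma bz_mul' (δN εN : ℕ) (hε : εN < 5) (x : ZMod 5) :
    (δN * x.val) % 5 = εN ↔ (δN : ZMod 5) * x = (εN : ZMod 5) := by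
  rw [bz_mod5_eq_iff _ _ hε]
  push_cast [bz_val_cast]
  exact Iff.rfl

lemma bz_mul'' (δ ε x : ZMod 5) :
    (δ.val * x.val) % 5 = ε.val ↔ δ * x = ε := by
  rw [bz_mod5_eq_iff _ _ (ZMod.val_lt _)]
  push_cast [bz_val_cast]
  exact Iff.rfl

lemma bz_final (q : Fin 6 → ℤ) (δZ εZ : ℤ) (j : Fin 6)
    (hj : δZ * q j ≡ 0 [ZMOD 5])
    (hothers : ∀ k : Fin 6, k ≠ j → δZ * q k ≡ εZ [ZMOD 5]) :
    ∀ i : Fin 6, δZ * q ((Equiv.swap 5 j) i) ≡ (if (i : ℕ) < 5 then εZ else 0) [ZMOD 5] := by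
  intro i
  by_cases hi : i = 5
  · subst hi
    rw [Equiv.swap_apply_left, if_neg (by decide)]
    exact hj
  · have hne : (i : ℕ) ≠ 5 := by simpa [Fin.ext_iff] using hi
    have hlt : (i : ℕ) < 5 := by have := i.isLt; omega
    rw [if_pos hlt]
    refine hothers _ ?_
    intro hc
    apply hi
    have h2 := congrArg (Equiv.swap (5 : Fin 6) j) hc
    rw [Equiv.swap_apply_self, Equiv.swap_apply_right] at h2
    exact h2

set_option maxRecDepth 1000000 in
set_option maxHeartbeats 10000000 in
set_option synthInstance.maxHeartbeats 0 in
set_option synthInstance.maxSize 1000000 in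
lemma bzKeyN : ∀ a < 5, ∀ b < 5, ∀ c < 5, ∀ d < 5, ∀ e < 5, ∀ f < 5,
    ((a+b+c+d+e+f) % 5 = 0 ∧ ¬((a + b) % 5 = 0 ∧ (c + d) % 5 = 0) ∧ ¬((a + b) % 5 = 0 ∧ (c + e) % 5 = 0) ∧ ¬((a + b) % 5 = 0 ∧ (c + f) % 5 = 0) ∧ ¬((a + b) % 5 = 0 ∧ (d + e) % 5 = 0) ∧ ¬((a + b) % 5 = 0 ∧ (d + f) % 5 = 0) ∧ ¬((a + b) % 5 = 0 ∧ (e + f) % 5 = 0) ∧ ¬((a + c) % 5 = 0 ∧ (b + d) % 5 = 0) ∧ ¬((a + c) % 5 = 0 ∧ (b + e) % 5 = 0) ∧ ¬((a + c) % 5 = 0 ∧ (b + f) % 5 = 0) ∧ ¬((a + c) % 5 = 0 ∧ (d + e) % 5 = 0) ∧ ¬((a + c) % 5 = 0 ∧ (d + f) % 5 = 0) ∧ ¬((a + c) % 5 = 0 ∧ (e + f) % 5 = 0) ∧ ¬((a + d) % 5 = 0 ∧ (b + c) % 5 = 0) ∧ ¬((a + d) % 5 = 0 ∧ (b + e) %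 5 = 0) ∧ ¬((a + d) % 5 = 0 ∧ (b + f) % 5 = 0) ∧ ¬((a + d) % 5 = 0 ∧ (c + e) % 5 = 0) ∧ ¬((a + d) % 5 = 0 ∧ (c + f) % 5 = 0) ∧ ¬((a + d) % 5 = 0 ∧ (e + f) % 5 = 0) ∧ ¬((a + e) % 5 = 0 ∧ (b + c) % 5 = 0) ∧ ¬((a + e) % 5 = 0 ∧ (b + d) % 5 = 0) ∧ ¬((a + e) % 5 = 0 ∧ (b + f) % 5 = 0) ∧ ¬((a + e) % 5 = 0 ∧ (c + d) % 5 = 0) ∧ ¬((a + e) % 5 = 0 ∧ (c + f) % 5 = 0) ∧ ¬((a + e) % 5 = 0 ∧ (d + f) % 5 = 0) ∧ ¬((a + f) % 5 = 0 ∧ (b + c) % 5 = 0) ∧ ¬((a + f) % 5 = 0 ∧ (b + d) % 5 = 0) ∧ ¬((a + f) % 5 = 0 ∧ (b + e) % 5 = 0) ∧ ¬((a + f) % 5 = 0 ∧ (c + d) % 5 = 0) ∧ ¬((a + f) % 5 = 0 ∧ (c + e) % 5 = 0) ∧ ¬((a + f) % 5 = 0 ∧ (d + e) % 5 = 0) ∧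 ¬((b + c) % 5 = 0 ∧ (d + e) % 5 = 0) ∧ ¬((b + c) % 5 = 0 ∧ (d + f) % 5 = 0) ∧ ¬((b + c) % 5 = 0 ∧ (e + f) % 5 = 0) ∧ ¬((b + d) % 5 = 0 ∧ (c + e) % 5 = 0) ∧ ¬((b + d) % 5 = 0 ∧ (c + f) % 5 = 0) ∧ ¬((b + d) % 5 = 0 ∧ (e + f) % 5 = 0) ∧ ¬((b + e) % 5 = 0 ∧ (c + d) % 5 = 0) ∧ ¬((b + e) % 5 = 0 ∧ (c + f) % 5 = 0) ∧ ¬((b + e) % 5 = 0 ∧ (d + f) % 5 = 0) ∧ ¬((b + f) % 5 = 0 ∧ (c + d) % 5 = 0) ∧ ¬((b + f) % 5 = 0 ∧ (c + e) % 5 = 0) ∧ ¬((b + f) % 5 = 0 ∧ (d + e) % 5 = 0) ∧ ¬((c + d) % 5 = 0 ∧ (e + f) % 5 = 0) ∧ ¬((c + e) % 5 = 0 ∧ (d + f) % 5 = 0) ∧ ¬((c + f) % 5 = 0 ∧ (d + e) % 5 = 0)) →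
    ((a * b * c + a * b * d + a * b * e + a * b * f + a * c * d + a * c * e + a * c * f + a * d * e + a * d * f + a * e * f + b * c * d + b * c * e + b * c * f + b * d * e + b * d * f + b * e * f + c * d * e + c * d * f + c * e * f + d * e * f) % 5 = 0 ↔ ∃ δ < 5, ∃ ε < 5,
      (ε = 1 ∨ ε = 2) ∧ (δ = 1 ∨ δ = 4) ∧ ((a = 0 ∧ (δ * b) % 5 = ε ∧ (δ * c) % 5 = ε ∧ (δ * d) % 5 = ε ∧ (δ * e) % 5 = ε ∧ (δ * f) % 5 = ε) ∨ (b = 0 ∧ (δ * a) % 5 = ε ∧ (δ * c) % 5 = ε ∧ (δ * d) % 5 = ε ∧ (δ * e) % 5 = ε ∧ (δ * f) % 5 = ε) ∨ (c = 0 ∧ (δ * a) % 5 = ε ∧ (δ * b) % 5 = ε ∧ (δ * d) % 5 = ε ∧ (δ * e) % 5 = ε ∧ (δ * f) % 5 = ε) ∨ (d = 0 ∧ (δ * a) % 5 = ε ∧ (δ * b) % 5 = ε ∧ (δ * c) % 5 = ε ∧ (δ * e) % 5 = ε ∧ (δ * f) % 5 = ε) ∨ (e = 0 ∧ (δ * a)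 % 5 = ε ∧ (δ * b) % 5 = ε ∧ (δ * c) % 5 = ε ∧ (δ * d) % 5 = ε ∧ (δ * f) % 5 = ε) ∨ (f = 0 ∧ (δ * a) % 5 = ε ∧ (δ * b) % 5 = ε ∧ (δ * c) % 5 = ε ∧ (δ * d) % 5 = ε ∧ (δ * e) % 5 = ε))) := by decide

lemma bzKeyZ (r : Fin 6 → ZMod 5)
    (hsum : r 0 + r 1 + r 2 + r 3 + r 4 + r 5 = 0)
    (hp : ∀ a b c d : Fin 6, a ≠ b → a ≠ c → a ≠ d → b ≠ c → b ≠ d → c ≠ d →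
      ¬(r a + r b = 0 ∧ r c + r d = 0)) :
    (r 0 * r 1 * r 2 + r 0 * r 1 * r 3 + r 0 * r 1 * r 4 + r 0 * r 1 * r 5 + r 0 * r 2 * r 3 + r 0 * r 2 * r 4 + r 0 * r 2 * r 5 + r 0 * r 3 * r 4 + r 0 * r 3 * r 5 + r 0 * r 4 * r 5 + r 1 * r 2 * r 3 + r 1 * r 2 * r 4 + r 1 * r 2 * r 5 + r 1 * r 3 * r 4 + r 1 * r 3 * r 5 + r 1 * r 4 * r 5 + r 2 * r 3 * r 4 + r 2 * r 3 * r 5 + r 2 * r 4 * r 5 + r 3 * r 4 * r 5 = 0 ↔ ∃ δ' ε' : ZMod 5, (ε' = 1 ∨ ε' = 2) ∧ (δ' = 1 ∨ δ' = -1) ∧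
      ((r 0 = 0 ∧ δ' * r 1 = ε' ∧ δ' * r 2 = ε' ∧ δ' * r 3 = ε' ∧ δ' * r 4 = ε' ∧ δ' * r 5 = ε') ∨ (r 1 = 0 ∧ δ' * r 0 = ε' ∧ δ' * r 2 = ε' ∧ δ' * r 3 = ε' ∧ δ' * r 4 = ε' ∧ δ' * r 5 = ε') ∨ (r 2 = 0 ∧ δ' * r 0 = ε' ∧ δ' * r 1 = ε' ∧ δ' * r 3 = ε' ∧ δ' * r 4 = ε' ∧ δ' * r 5 = ε') ∨ (r 3 = 0 ∧ δ' * r 0 = ε' ∧ δ' * r 1 = ε' ∧ δ' * r 2 = ε' ∧ δ' * r 4 = ε' ∧ δ' * r 5 = ε') ∨ (r 4 = 0 ∧ δ' * r 0 = ε' ∧ δ' * r 1 = ε' ∧ δ' * r 2 = ε' ∧ δ' * r 3 = ε' ∧ δ' * r 5 = ε') ∨ (r 5 = 0 ∧ δ' * r 0 = ε' ∧ δ' * r 1 = ε' ∧ δ' * r 2 = ε' ∧ δ' * r 3 = ε' ∧ δ' * r 4 = ε'))) := by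
  have H := bzKeyN (r 0).val (ZMod.val_lt _) (r 1).val (ZMod.val_lt _) (r 2).val (ZMod.val_lt _) (r 3).val (ZMod.val_lt _) (r 4).val (ZMod.val_lt _) (r 5).val (ZMod.val_lt _)
  have H2 := H ⟨(by rw [bz_mod5_zero]; push_cast [bz_val_cast]; exact hsum), (bz_pair (r 0) (r 1) (r 2) (r 3) (hp 0 1 2 3 (by decide) (by decide) (by decide) (by decide) (by decide) (by decide))), (bz_pair (r 0) (r 1) (r 2) (r 4) (hp 0 1 2 4 (by decide) (by decide) (by decide) (by decide) (by decide) (by decide))), (bz_pair (r 0) (r 1) (r 2) (r 5) (hp 0 1 2 5 (by decide) (by decide) (by decide) (by decide) (by decide) (by decide))), (bz_pair (r 0) (r 1) (r 3) (r 4) (hp 0 1 3 4 (by decide) (by decide) (by decide) (by decide) (by decide) (by decide))), (bz_pair (r 0) (r 1) (r 3) (r 5) (hp 0 1 3 5 (by decide) (by decide) (by decide) (by decide) (by decide) (by decide))), (bz_pair (r 0) (r 1) (r 4) (r 5) (hp 0 1 4 5 (by decide) (by decide) (by decide) (by decide) (by decide) (by decide))), (bz_pair (r 0) (r 2) (r 1)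 (r 3) (hp 0 2 1 3 (by decide) (by decide) (by decide) (by decide) (by decide) (by decide))), (bz_pair (r 0) (r 2) (r 1) (r 4) (hp 0 2 1 4 (by decide) (by decide) (by decide) (by decide) (by decide) (by decide))), (bz_pair (r 0) (r 2) (r 1) (r 5) (hp 0 2 1 5 (by decide) (by decide) (by decide) (by decide) (by decide) (by decide))), (bz_pair (r 0) (r 2) (r 3) (r 4) (hp 0 2 3 4 (by decide) (by decide) (by decide) (by decide) (by decide) (by decide))), (bz_pair (r 0) (r 2) (r 3) (r 5) (hp 0 2 3 5 (by decide) (by decide) (by decide) (by decide) (by decide) (by decide))), (bz_pair (r 0) (r 2) (r 4) (r 5) (hp 0 2 4 5 (by decide) (by decide) (by decide) (by decide) (by decide) (by decide))), (bz_pair (r 0) (r 3) (r 1) (r 2) (hp 0 3 1 2 (by decide) (by decide) (by decide) (by decide) (by decide) (by decide))), (bz_pair (r 0) (r 3) (r 1) (r 4) (hp 0 3 1 4 (by decide) (by decide) (by decide) (by decide) (by decide) (by decide))), (bz_pair (r 0) (r 3) (r 1) (r 5) (hp 0 3 1 5 (by decide) (by decide) (by decide) (by decide) (by decide) (by decide))),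 (bz_pair (r 0) (r 3) (r 2) (r 4) (hp 0 3 2 4 (by decide) (by decide) (by decide) (by decide) (by decide) (by decide))), (bz_pair (r 0) (r 3) (r 2) (r 5) (hp 0 3 2 5 (by decide) (by decide) (by decide) (by decide) (by decide) (by decide))), (bz_pair (r 0) (r 3) (r 4) (r 5) (hp 0 3 4 5 (by decide) (by decide) (by decide) (by decide) (by decide) (by decide))), (bz_pair (r 0) (r 4) (r 1) (r 2) (hp 0 4 1 2 (by decide) (by decide) (by decide) (by decide) (by decide) (by decide))), (bz_pair (r 0) (r 4) (r 1) (r 3) (hp 0 4 1 3 (by decide) (by decide) (by decide) (by decide) (by decide) (by decide))), (bz_pair (r 0) (r 4) (r 1) (r 5) (hp 0 4 1 5 (by decide) (by decide) (by decide) (by decide) (by decide) (by decide))), (bz_pair (r 0) (r 4) (r 2) (r 3) (hp 0 4 2 3 (by decide) (by decide) (by decide) (by decide) (by decide) (by decide))), (bz_pair (r 0) (r 4) (r 2) (r 5) (hp 0 4 2 5 (by decide) (by decide) (by decide) (by decide) (by decide) (by decide))), (bz_pair (r 0) (r 4) (r 3) (r 5) (hp 0 4 3 5 (by decide) (by decide)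 (by decide) (by decide) (by decide) (by decide))), (bz_pair (r 0) (r 5) (r 1) (r 2) (hp 0 5 1 2 (by decide) (by decide) (by decide) (by decide) (by decide) (by decide))), (bz_pair (r 0) (r 5) (r 1) (r 3) (hp 0 5 1 3 (by decide) (by decide) (by decide) (by decide) (by decide) (by decide))), (bz_pair (r 0) (r 5) (r 1) (r 4) (hp 0 5 1 4 (by decide) (by decide) (by decide) (by decide) (by decide) (by decide))), (bz_pair (r 0) (r 5) (r 2) (r 3) (hp 0 5 2 3 (by decide) (by decide) (by decide) (by decide) (by decide) (by decide))), (bz_pair (r 0) (r 5) (r 2) (r 4) (hp 0 5 2 4 (by decide) (by decide) (by decide) (by decide) (by decide) (by decide))), (bz_pair (r 0) (r 5) (r 3) (r 4) (hp 0 5 3 4 (by decide) (by decide) (by decide) (by decide) (by decide) (by decide))), (bz_pair (r 1) (r 2) (r 3) (r 4) (hp 1 2 3 4 (by decide) (by decide) (by decide) (by decide) (by decide) (by decide))), (bz_pair (r 1) (r 2) (r 3) (r 5) (hp 1 2 3 5 (by decide) (by decide) (by decide) (by decide) (by decide) (by decide))), (bz_pair (r 1) (r 2) (r 4) (r 5)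 (hp 1 2 4 5 (by decide) (by decide) (by decide) (by decide) (by decide) (by decide))), (bz_pair (r 1) (r 3) (r 2) (r 4) (hp 1 3 2 4 (by decide) (by decide) (by decide) (by decide) (by decide) (by decide))), (bz_pair (r 1) (r 3) (r 2) (r 5) (hp 1 3 2 5 (by decide) (by decide) (by decide) (by decide) (by decide) (by decide))), (bz_pair (r 1) (r 3) (r 4) (r 5) (hp 1 3 4 5 (by decide) (by decide) (by decide) (by decide) (by decide) (by decide))), (bz_pair (r 1) (r 4) (r 2) (r 3) (hp 1 4 2 3 (by decide) (by decide) (by decide) (by decide) (by decide) (by decide))), (bz_pair (r 1) (r 4) (r 2) (r 5) (hp 1 4 2 5 (by decide) (by decide) (by decide) (by decide) (by decide) (by decide))), (bz_pair (r 1) (r 4) (r 3) (r 5) (hp 1 4 3 5 (by decide) (by decide) (by decide) (by decide) (by decide) (by decide))), (bz_pair (r 1) (r 5) (r 2) (r 3) (hp 1 5 2 3 (by decide) (by decide) (by decide) (by decide) (by decide) (by decide))), (bz_pair (r 1) (r 5) (r 2) (r 4) (hp 1 5 2 4 (by decide) (by decide) (by decide) (by decide) (by decide) (by decide))), (bz_pair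 (r 1) (r 5) (r 3) (r 4) (hp 1 5 3 4 (by decide) (by decide) (by decide) (by decide) (by decide) (by decide))), (bz_pair (r 2) (r 3) (r 4) (r 5) (hp 2 3 4 5 (by decide) (by decide) (by decide) (by decide) (by decide) (by decide))), (bz_pair (r 2) (r 4) (r 3) (r 5) (hp 2 4 3 5 (by decide) (by decide) (by decide) (by decide) (by decide) (by decide))), (bz_pair (r 2) (r 5) (r 3) (r 4) (hp 2 5 3 4 (by decide) (by decide) (by decide) (by decide) (by decide) (by decide)))⟩
  constructor
  · intro h0
    have h0' : ((r 0).val * (r 1).val * (r 2).val + (r 0).val * (r 1).val * (r 3).val + (r 0).val * (r 1).val * (r 4).val + (r 0).val * (r 1).val * (r 5).val + (r 0).val * (r 2).val * (r 3).val + (r 0).val * (r 2).val * (r 4).val + (r 0).val * (r 2).val * (r 5).val + (r 0).val * (r 3).val * (r 4).val + (r 0).val * (r 3).val * (r 5).val + (r 0).val * (r 4).val * (r 5).val + (r 1).val * (r 2).val * (r 3).val + (r 1).val * (r 2).val * (r 4).val + (r 1).val * (r 2).val * (r 5).val + (r 1).val * (r 3).val * (r 4).val + (r 1).val * (r 3).val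 * (r 5).val + (r 1).val * (r 4).val * (r 5).val + (r 2).val * (r 3).val * (r 4).val + (r 2).val * (r 3).val * (r 5).val + (r 2).val * (r 4).val * (r 5).val + (r 3).val * (r 4).val * (r 5).val) % 5 = 0 := by
      rw [bz_mod5_zero]; push_cast [bz_val_cast]; exact h0
    obtain ⟨δN, hδlt, εN, hεlt, hε, hδ, hD⟩ := H2.mp h0'
    refine ⟨(δN : ZMod 5), (εN : ZMod 5), ?_, ?_, ?_⟩
    · rcases hε with rfl | rfl
      · left; norm_num
      · right; norm_num
    · rcases hδ with rfl | rfl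
      · left; norm_num
      · right; decide
    rcases hD with ⟨h1, h2, h3, h4, h5, h6⟩ | ⟨h1, h2, h3, h4, h5, h6⟩ | ⟨h1, h2, h3, h4, h5, h6⟩ | ⟨h1, h2, h3, h4, h5, h6⟩ | ⟨h1, h2, h3, h4, h5, h6⟩ | ⟨h1, h2, h3, h4, h5, h6⟩
    · exact Or.inl ⟨(ZMod.val_eq_zero (r 0)).mp h1, (bz_mul' δN εN hεlt (r 1)).mp h2, (bz_mul' δN εN hεlt (r 2)).mp h3, (bz_mul' δN εN hεlt (r 3)).mp h4, (bz_mul' δN εN hεlt (r 4)).mp h5, (bz_mul' δN εN hεlt (r 5)).mp h6⟩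
    · exact Or.inr (Or.inl ⟨(ZMod.val_eq_zero (r 1)).mp h1, (bz_mul' δN εN hεlt (r 0)).mp h2, (bz_mul' δN εN hεlt (r 2)).mp h3, (bz_mul' δN εN hεlt (r 3)).mp h4, (bz_mul' δN εN hεlt (r 4)).mp h5, (bz_mul' δN εN hεlt (r 5)).mp h6⟩)
    · exact Or.inr (Or.inr (Or.inl ⟨(ZMod.val_eq_zero (r 2)).mp h1, (bz_mul' δN εN hεlt (r 0)).mp h2, (bz_mul' δN εN hεlt (r 1)).mp h3, (bz_mul' δN εN hεlt (r 3)).mp h4, (bz_mul' δN εN hεlt (r 4)).mp h5, (bz_mul' δN εN hεlt (r 5)).mp h6⟩))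
    · exact Or.inr (Or.inr (Or.inr (Or.inl ⟨(ZMod.val_eq_zero (r 3)).mp h1, (bz_mul' δN εN hεlt (r 0)).mp h2, (bz_mul' δN εN hεlt (r 1)).mp h3, (bz_mul' δN εN hεlt (r 2)).mp h4, (bz_mul' δN εN hεlt (r 4)).mp h5, (bz_mul' δN εN hεlt (r 5)).mp h6⟩)))
    · exact Or.inr (Or.inr (Or.inr (Or.inr (Or.inl ⟨(ZMod.val_eq_zero (r 4)).mp h1, (bz_mul' δN εN hεlt (r 0)).mp h2, (bz_mul' δN εN hεlt (r 1)).mp h3, (bz_mul' δN εN hεlt (r 2)).mp h4, (bz_mul' δN εN hεlt (r 3)).mp h5, (bz_mul' δN εN hεlt (r 5)).mp h6⟩))))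
    · exact Or.inr (Or.inr (Or.inr (Or.inr (Or.inr (⟨(ZMod.val_eq_zero (r 5)).mp h1, (bz_mul' δN εN hεlt (r 0)).mp h2, (bz_mul' δN εN hεlt (r 1)).mp h3, (bz_mul' δN εN hεlt (r 2)).mp h4, (bz_mul' δN εN hεlt (r 3)).mp h5, (bz_mul' δN εN hεlt (r 4)).mp h6⟩)))))
  · rintro ⟨δ', ε', hε, hδ, hD⟩
    have hεv : ε'.val = 1 ∨ ε'.val = 2 := by
      rcases hε with rfl | rfl
      · left; decide
      · right; decide
    have hδv : δ'.val = 1 ∨ δ'.val = 4 := by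
      rcases hδ with rfl | rfl
      · left; decide
      · right; decide
    have hDn : ((r 0).val = 0 ∧ (δ'.val * (r 1).val) % 5 = ε'.val ∧ (δ'.val * (r 2).val) % 5 = ε'.val ∧ (δ'.val * (r 3).val) % 5 = ε'.val ∧ (δ'.val * (r 4).val) % 5 = ε'.val ∧ (δ'.val * (r 5).val) % 5 = ε'.val) ∨ ((r 1).val = 0 ∧ (δ'.val * (r 0).val) % 5 = ε'.val ∧ (δ'.val * (r 2).val) % 5 = ε'.val ∧ (δ'.val * (r 3).val) % 5 = ε'.val ∧ (δ'.val * (r 4).val) % 5 = ε'.val ∧ (δ'.val * (r 5).val) % 5 = ε'.val) ∨ ((r 2).val = 0 ∧ (δ'.val * (r 0).val) % 5 = ε'.val ∧ (δ'.val * (r 1).val) % 5 = ε'.val ∧ (δ'.val * (r 3).val) % 5 = ε'.val ∧ (δ'.val * (r 4).val) % 5 = ε'.val ∧ (δ'.val * (r 5).val) % 5 = ε'.val) ∨ ((r 3).val = 0 ∧ (δ'.val * (r 0).val) % 5 = ε'.val ∧ (δ'.val * (r 1).val) % 5 = ε'.val ∧ (δ'.val * (r 2).val) % 5 = ε'.val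 ∧ (δ'.val * (r 4).val) % 5 = ε'.val ∧ (δ'.val * (r 5).val) % 5 = ε'.val) ∨ ((r 4).val = 0 ∧ (δ'.val * (r 0).val) % 5 = ε'.val ∧ (δ'.val * (r 1).val) % 5 = ε'.val ∧ (δ'.val * (r 2).val) % 5 = ε'.val ∧ (δ'.val * (r 3).val) % 5 = ε'.val ∧ (δ'.val * (r 5).val) % 5 = ε'.val) ∨ ((r 5).val = 0 ∧ (δ'.val * (r 0).val) % 5 = ε'.val ∧ (δ'.val * (r 1).val) % 5 = ε'.val ∧ (δ'.val * (r 2).val) % 5 = ε'.val ∧ (δ'.val * (r 3).val) % 5 = ε'.val ∧ (δ'.val * (r 4).val) % 5 = ε'.val) := by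
      rcases hD with ⟨h1, h2, h3, h4, h5, h6⟩ | ⟨h1, h2, h3, h4, h5, h6⟩ | ⟨h1, h2, h3, h4, h5, h6⟩ | ⟨h1, h2, h3, h4, h5, h6⟩ | ⟨h1, h2, h3, h4, h5, h6⟩ | ⟨h1, h2, h3, h4, h5, h6⟩
      · exact Or.inl ⟨(ZMod.val_eq_zero (r 0)).mpr h1, (bz_mul'' δ' ε' (r 1)).mpr h2, (bz_mul'' δ' ε' (r 2)).mpr h3, (bz_mul'' δ' ε' (r 3)).mpr h4, (bz_mul'' δ' ε' (r 4)).mpr h5, (bz_mul'' δ' ε' (r 5)).mpr h6⟩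
      · exact Or.inr (Or.inl ⟨(ZMod.val_eq_zero (r 1)).mpr h1, (bz_mul'' δ' ε' (r 0)).mpr h2, (bz_mul'' δ' ε' (r 2)).mpr h3, (bz_mul'' δ' ε' (r 3)).mpr h4, (bz_mul'' δ' ε' (r 4)).mpr h5, (bz_mul'' δ' ε' (r 5)).mpr h6⟩)
      · exact Or.inr (Or.inr (Or.inl ⟨(ZMod.val_eq_zero (r 2)).mpr h1, (bz_mul'' δ' ε' (r 0)).mpr h2, (bz_mul'' δ' ε' (r 1)).mpr h3, (bz_mul'' δ' ε' (r 3)).mpr h4, (bz_mul'' δ' ε' (r 4)).mpr h5, (bz_mul'' δ' ε' (r 5)).mpr h6⟩))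
      · exact Or.inr (Or.inr (Or.inr (Or.inl ⟨(ZMod.val_eq_zero (r 3)).mpr h1, (bz_mul'' δ' ε' (r 0)).mpr h2, (bz_mul'' δ' ε' (r 1)).mpr h3, (bz_mul'' δ' ε' (r 2)).mpr h4, (bz_mul'' δ' ε' (r 4)).mpr h5, (bz_mul'' δ' ε' (r 5)).mpr h6⟩)))
      · exact Or.inr (Or.inr (Or.inr (Or.inr (Or.inl ⟨(ZMod.val_eq_zero (r 4)).mpr h1, (bz_mul'' δ' ε' (r 0)).mpr h2, (bz_mul'' δ' ε' (r 1)).mpr h3, (bz_mul'' δ' ε' (r 2)).mpr h4, (bz_mul'' δ' ε' (r 3)).mpr h5, (bz_mul'' δ' ε' (r 5)).mpr h6⟩))))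
      · exact Or.inr (Or.inr (Or.inr (Or.inr (Or.inr (⟨(ZMod.val_eq_zero (r 5)).mpr h1, (bz_mul'' δ' ε' (r 0)).mpr h2, (bz_mul'' δ' ε' (r 1)).mpr h3, (bz_mul'' δ' ε' (r 2)).mpr h4, (bz_mul'' δ' ε' (r 3)).mpr h5, (bz_mul'' δ' ε' (r 4)).mpr h6⟩)))))
    have h0' := H2.mpr ⟨δ'.val, ZMod.val_lt _, ε'.val, ZMod.val_lt _, hεv, hδv, hDn⟩
    have h0 := (bz_mod5_zero _).mp h0'
    push_cast [bz_val_cast] at h0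
    exact h0

lemma bz_expand (q : Fin 6 → ℤ) : esymm 3 q = q 0 * q 1 * q 2 + q 0 * q 1 * q 3 + q 0 * q 1 * q 4 + q 0 * q 1 * q 5 + q 0 * q 2 * q 3 + q 0 * q 2 * q 4 + q 0 * q 2 * q 5 + q 0 * q 3 * q 4 + q 0 * q 3 * q 5 + q 0 * q 4 * q 5 + q 1 * q 2 * q 3 + q 1 * q 2 * q 4 + q 1 * q 2 * q 5 + q 1 * q 3 * q 4 + q 1 * q 3 * q 5 + q 1 * q 4 * q 5 + q 2 * q 3 * q 4 + q 2 * q 3 * q 5 + q 2 * q 4 * q 5 + q 3 * q 4 * q 5 := by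
  unfold esymm
  simp (config := { decide := true }) [show (Finset.univ.powersetCard 3 : Finset (Finset (Fin 6))) = {{0,1,2},{0,1,3},{0,1,4},{0,1,5},{0,2,3},{0,2,4},{0,2,5},{0,3,4},{0,3,5},{0,4,5},{1,2,3},{1,2,4},{1,2,5},{1,3,4},{1,3,5},{1,4,5},{2,3,4},{2,3,5},{2,4,5},{3,4,5}} from by decide, Finset.sum_insert, Finset.prod_insert, Finset.mem_insert]
  ring

theorem five_dvd_sigma3_iff (q : Fin 6 → ℤ) (h : BazaikinFree q) :
    (5 ∣ esymm 3 q) ↔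
      ∃ (σ : Equiv.Perm (Fin 6)) (ε δ : ℤ), (ε = 1 ∨ ε = 2) ∧ (δ = 1 ∨ δ = -1) ∧
        ∀ i : Fin 6, δ * q (σ i) ≡ (if (i : ℕ) < 5 then ε else 0) [ZMOD 5] := by
  obtain ⟨hsum, hodd, hgcd⟩ := h
  have hsum' : ((q 0 : ℤ) : ZMod 5) + ((q 1 : ℤ) : ZMod 5) + ((q 2 : ℤ) : ZMod 5) + ((q 3 : ℤ) : ZMod 5) + ((q 4 : ℤ) : ZMod 5) + ((q 5 : ℤ) : ZMod 5) = 0 := by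
    have h1 : ((∑ i, q i : ℤ) : ZMod 5) = 0 := by rw [hsum]; norm_num
    rw [Fin.sum_univ_six] at h1
    push_cast at h1
    exact h1
  have hp' : ∀ a b c d : Fin 6, a ≠ b → a ≠ c → a ≠ d → b ≠ c → b ≠ d → c ≠ d →
      ¬(((q a : ℤ) : ZMod 5) + ((q b : ℤ) : ZMod 5) = 0 ∧ ((q c : ℤ) : ZMod 5) + ((q d : ℤ) : ZMod 5) = 0) := by
    intro a b c d h1 h2 h3 h4 h5 h6
    rintro ⟨hx, hy⟩
    have d1 : ((5:ℕ):ℤ) ∣ q a + q b := (ZMod.intCast_zmod_eq_zero_iff_dvd _ 5).mp (by push_cast; exact hx)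
    have d2 : ((5:ℕ):ℤ) ∣ q c + q d := (ZMod.intCast_zmod_eq_zero_iff_dvd _ 5).mp (by push_cast; exact hy)
    have d3 := Int.dvd_gcd d1 d2
    rw [hgcd a b c d h1 h2 h3 h4 h5 h6] at d3
    norm_num at d3
  have key := bzKeyZ (fun i => ((q i : ℤ) : ZMod 5)) hsum' hp'
  have hcast : ((esymm 3 q : ℤ) : ZMod 5) = ((q 0 : ℤ) : ZMod 5) * ((q 1 : ℤ) : ZMod 5) * ((q 2 : ℤ) : ZMod 5) + ((q 0 : ℤ) : ZMod 5) * ((q 1 : ℤ) : ZMod 5) * ((q 3 : ℤ) : ZMod 5) + ((q 0 : ℤ) : ZMod 5) * ((q 1 : ℤ) : ZMod 5) * ((q 4 : ℤ) : ZMod 5) + ((q 0 : ℤ) : ZMod 5) * ((q 1 : ℤ) : ZMod 5) * ((q 5 : ℤ) : ZMod 5) + ((q 0 : ℤ) : ZMod 5) * ((q 2 : ℤ) : ZMod 5) * ((q 3 : ℤ) : ZMod 5) + ((q 0 : ℤ) : ZMod 5) * ((q 2 : ℤ) : ZMod 5) * ((q 4 : ℤ) : ZMod 5) + ((q 0 :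 ℤ) : ZMod 5) * ((q 2 : ℤ) : ZMod 5) * ((q 5 : ℤ) : ZMod 5) + ((q 0 : ℤ) : ZMod 5) * ((q 3 : ℤ) : ZMod 5) * ((q 4 : ℤ) : ZMod 5) + ((q 0 : ℤ) : ZMod 5) * ((q 3 : ℤ) : ZMod 5) * ((q 5 : ℤ) : ZMod 5) + ((q 0 : ℤ) : ZMod 5) * ((q 4 : ℤ) : ZMod 5) * ((q 5 : ℤ) : ZMod 5) + ((q 1 : ℤ) : ZMod 5) * ((q 2 : ℤ) : ZMod 5) * ((q 3 : ℤ) : ZMod 5) + ((q 1 : ℤ) : ZMod 5) * ((q 2 : ℤ) : ZMod 5) * ((q 4 : ℤ) : ZMod 5) + ((q 1 : ℤ) : ZMod 5) * ((q 2 : ℤ) : ZMod 5) * ((q 5 : ℤ) : ZMod 5) + ((q 1 : ℤ) : ZMod 5) * ((q 3 : ℤ) : ZMod 5) * ((q 4 : ℤ) : ZMod 5) + ((q 1 : ℤ) : ZMod 5) * ((q 3 : ℤ) : ZMod 5) * ((q 5 : ℤ) : ZMod 5) + ((q 1 : ℤ) : ZMod 5) * ((q 4 : ℤ) : ZMod 5)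 * ((q 5 : ℤ) : ZMod 5) + ((q 2 : ℤ) : ZMod 5) * ((q 3 : ℤ) : ZMod 5) * ((q 4 : ℤ) : ZMod 5) + ((q 2 : ℤ) : ZMod 5) * ((q 3 : ℤ) : ZMod 5) * ((q 5 : ℤ) : ZMod 5) + ((q 2 : ℤ) : ZMod 5) * ((q 4 : ℤ) : ZMod 5) * ((q 5 : ℤ) : ZMod 5) + ((q 3 : ℤ) : ZMod 5) * ((q 4 : ℤ) : ZMod 5) * ((q 5 : ℤ) : ZMod 5) := by
    rw [bz_expand q]; push_cast; ring
  constructor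
  · intro hdvd
    have h0 : ((esymm 3 q : ℤ) : ZMod 5) = 0 := (ZMod.intCast_zmod_eq_zero_iff_dvd _ 5).mpr (by exact_mod_cast hdvd)
    rw [hcast] at h0
    obtain ⟨δ', ε', hε, hδ, hD⟩ := key.mp h0
    obtain ⟨εZ, hεZor, hεZcast⟩ : ∃ εZ : ℤ, (εZ = 1 ∨ εZ = 2) ∧ ((εZ : ℤ) : ZMod 5) = ε' := by
      rcases hε with rfl | rfl
      · exact ⟨1, Or.inl rfl, by norm_num⟩
      · exact ⟨2, Or.inr rfl, by norm_num⟩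
    obtain ⟨δZ, hδZor, hδZcast⟩ : ∃ δZ : ℤ, (δZ = 1 ∨ δZ = -1) ∧ ((δZ : ℤ) : ZMod 5) = δ' := by
      rcases hδ with rfl | rfl
      · exact ⟨1, Or.inl rfl, by norm_num⟩
      · exact ⟨-1, Or.inr rfl, by norm_num⟩
    rcases hD with ⟨h1, h2, h3, h4, h5, h6⟩ | ⟨h1, h2, h3, h4, h5, h6⟩ | ⟨h1, h2, h3, h4, h5, h6⟩ | ⟨h1, h2, h3, h4, h5, h6⟩ | ⟨h1, h2, h3, h4, h5, h6⟩ | ⟨h1, h2, h3, h4, h5, h6⟩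
    · refine ⟨Equiv.swap 5 (0 : Fin 6), εZ, δZ, hεZor, hδZor, bz_final q δZ εZ 0 ?_ ?_⟩
      · apply (ZMod.intCast_eq_intCast_iff _ _ 5).mp
        push_cast
        rw [hδZcast]
        have h1' : ((q 0 : ℤ) : ZMod 5) = 0 := h1
        rw [h1', mul_zero]
      · intro k hk
        fin_cases k
        · exact absurd rfl hk
        · apply (ZMod.intCast_eq_intCast_iff _ _ 5).mp
          push_cast
          rw [hδZcast, hεZcast]
          exact h2
        · apply (ZMod.intCast_eq_intCast_iff _ _ 5).mp
          push_cast
          rw [hδZcast, hεZcast]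
          exact h3
        · apply (ZMod.intCast_eq_intCast_iff _ _ 5).mp
          push_cast
          rw [hδZcast, hεZcast]
          exact h4
        · apply (ZMod.intCast_eq_intCast_iff _ _ 5).mp
          push_cast
          rw [hδZcast, hεZcast]
          exact h5
        · apply (ZMod.intCast_eq_intCast_iff _ _ 5).mp
          push_cast
          rw [hδZcast, hεZcast]
          exact h6
    · refine ⟨Equiv.swap 5 (1 : Fin 6), εZ, δZ, hεZor, hδZor, bz_final q δZ εZ 1 ?_ ?_⟩
      · apply (ZMod.intCast_eq_intCast_iff _ _ 5).mp
        push_cast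
        rw [hδZcast]
        have h1' : ((q 1 : ℤ) : ZMod 5) = 0 := h1
        rw [h1', mul_zero]
      · intro k hk
        fin_cases k
        · apply (ZMod.intCast_eq_intCast_iff _ _ 5).mp
          push_cast
          rw [hδZcast, hεZcast]
          exact h2
        · exact absurd rfl hk
        · apply (ZMod.intCast_eq_intCast_iff _ _ 5).mp
          push_cast
          rw [hδZcast, hεZcast]
          exact h3
        · apply (ZMod.intCast_eq_intCast_iff _ _ 5).mp
          push_cast
          rw [hδZcast, hεZcast]
          exact h4
        · apply (ZMod.intCast_eq_intCast_iff _ _ 5).mp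
          push_cast
          rw [hδZcast, hεZcast]
          exact h5
        · apply (ZMod.intCast_eq_intCast_iff _ _ 5).mp
          push_cast
          rw [hδZcast, hεZcast]
          exact h6
    · refine ⟨Equiv.swap 5 (2 : Fin 6), εZ, δZ, hεZor, hδZor, bz_final q δZ εZ 2 ?_ ?_⟩
      · apply (ZMod.intCast_eq_intCast_iff _ _ 5).mp
        push_cast
        rw [hδZcast]
        have h1' : ((q 2 : ℤ) : ZMod 5) = 0 := h1
        rw [h1', mul_zero]
      · intro k hk
        fin_cases k
        · apply (ZMod.intCast_eq_intCast_iff _ _ 5).mp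
          push_cast
          rw [hδZcast, hεZcast]
          exact h2
        · apply (ZMod.intCast_eq_intCast_iff _ _ 5).mp
          push_cast
          rw [hδZcast, hεZcast]
          exact h3
        · exact absurd rfl hk
        · apply (ZMod.intCast_eq_intCast_iff _ _ 5).mp
          push_cast
          rw [hδZcast, hεZcast]
          exact h4
        · apply (ZMod.intCast_eq_intCast_iff _ _ 5).mp
          push_cast
          rw [hδZcast, hεZcast]
          exact h5
        · apply (ZMod.intCast_eq_intCast_iff _ _ 5).mp
          push_cast
          rw [hδZcast, hεZcast]
          exact h6
    · refine ⟨Equiv.swap 5 (3 : Fin 6), εZ, δZ, hεZor, hδZor, bz_final q δZ εZ 3 ?_ ?_⟩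
      · apply (ZMod.intCast_eq_intCast_iff _ _ 5).mp
        push_cast
        rw [hδZcast]
        have h1' : ((q 3 : ℤ) : ZMod 5) = 0 := h1
        rw [h1', mul_zero]
      · intro k hk
        fin_cases k
        · apply (ZMod.intCast_eq_intCast_iff _ _ 5).mp
          push_cast
          rw [hδZcast, hεZcast]
          exact h2
        · apply (ZMod.intCast_eq_intCast_iff _ _ 5).mp
          push_cast
          rw [hδZcast, hεZcast]
          exact h3
        · apply (ZMod.intCast_eq_intCast_iff _ _ 5).mp
          push_cast
          rw [hδZcast, hεZcast]
          exact h4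
        · exact absurd rfl hk
        · apply (ZMod.intCast_eq_intCast_iff _ _ 5).mp
          push_cast
          rw [hδZcast, hεZcast]
          exact h5
        · apply (ZMod.intCast_eq_intCast_iff _ _ 5).mp
          push_cast
          rw [hδZcast, hεZcast]
          exact h6
    · refine ⟨Equiv.swap 5 (4 : Fin 6), εZ, δZ, hεZor, hδZor, bz_final q δZ εZ 4 ?_ ?_⟩
      · apply (ZMod.intCast_eq_intCast_iff _ _ 5).mp
        push_cast
        rw [hδZcast]
        have h1' : ((q 4 : ℤ) : ZMod 5) = 0 := h1
        rw [h1', mul_zero]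
      · intro k hk
        fin_cases k
        · apply (ZMod.intCast_eq_intCast_iff _ _ 5).mp
          push_cast
          rw [hδZcast, hεZcast]
          exact h2
        · apply (ZMod.intCast_eq_intCast_iff _ _ 5).mp
          push_cast
          rw [hδZcast, hεZcast]
          exact h3
        · apply (ZMod.intCast_eq_intCast_iff _ _ 5).mp
          push_cast
          rw [hδZcast, hεZcast]
          exact h4
        · apply (ZMod.intCast_eq_intCast_iff _ _ 5).mp
          push_cast
          rw [hδZcast, hεZcast]
          exact h5
        · exact absurd rfl hk
        · apply (ZMod.intCast_eq_intCast_iff _ _ 5).mp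
          push_cast
          rw [hδZcast, hεZcast]
          exact h6
    · refine ⟨Equiv.swap 5 (5 : Fin 6), εZ, δZ, hεZor, hδZor, bz_final q δZ εZ 5 ?_ ?_⟩
      · apply (ZMod.intCast_eq_intCast_iff _ _ 5).mp
        push_cast
        rw [hδZcast]
        have h1' : ((q 5 : ℤ) : ZMod 5) = 0 := h1
        rw [h1', mul_zero]
      · intro k hk
        fin_cases k
        · apply (ZMod.intCast_eq_intCast_iff _ _ 5).mp
          push_cast
          rw [hδZcast, hεZcast]
          exact h2
        · apply (ZMod.intCast_eq_intCast_iff _ _ 5).mp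
          push_cast
          rw [hδZcast, hεZcast]
          exact h3
        · apply (ZMod.intCast_eq_intCast_iff _ _ 5).mp
          push_cast
          rw [hδZcast, hεZcast]
          exact h4
        · apply (ZMod.intCast_eq_intCast_iff _ _ 5).mp
          push_cast
          rw [hδZcast, hεZcast]
          exact h5
        · apply (ZMod.intCast_eq_intCast_iff _ _ 5).mp
          push_cast
          rw [hδZcast, hεZcast]
          exact h6
        · exact absurd rfl hk
  · rintro ⟨σ, ε, δ, hε, hδ, hcong⟩
    have hεc : ((ε : ℤ) : ZMod 5) = 1 ∨ ((ε : ℤ) : ZMod 5) = 2 := by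
      rcases hε with rfl | rfl
      · left; norm_num
      · right; norm_num
    have hδc : ((δ : ℤ) : ZMod 5) = 1 ∨ ((δ : ℤ) : ZMod 5) = -1 := by
      rcases hδ with rfl | rfl
      · left; norm_num
      · right; push_cast; ring
    have hzero : ((δ : ℤ) : ZMod 5) * ((q (σ 5) : ℤ) : ZMod 5) = 0 := by
      have hc := hcong 5
      rw [if_neg (by decide)] at hc
      have hc2 := (ZMod.intCast_eq_intCast_iff _ _ 5).mpr hc
      push_cast at hc2
      exact hc2
    have hall : ∀ k : Fin 6, k ≠ σ 5 → ((δ : ℤ) : ZMod 5) * ((q k : ℤ) : ZMod 5) = ((ε : ℤ) : ZMod 5) := by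
      intro k hk
      have hi5 : σ.symm k ≠ 5 := by intro hc; apply hk; rw [← Equiv.apply_symm_apply σ k, hc]
      have hne : ((σ.symm k : Fin 6) : ℕ) ≠ 5 := by simpa [Fin.ext_iff] using hi5
      have hlt : ((σ.symm k : Fin 6) : ℕ) < 5 := by have := (σ.symm k).isLt; omega
      have hc := hcong (σ.symm k)
      rw [Equiv.apply_symm_apply, if_pos hlt] at hc
      have hc2 := (ZMod.intCast_eq_intCast_iff _ _ 5).mpr hc
      push_cast at hc2
      exact hc2
    have hrj : ((q (σ 5) : ℤ) : ZMod 5) = 0 := by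
      rcases hδc with hh | hh <;> rw [hh] at hzero <;> simpa using hzero
    have h6 : ∀ k : Fin 6, k = 0 ∨ k = 1 ∨ k = 2 ∨ k = 3 ∨ k = 4 ∨ k = 5 := by decide
    have hres := key.mpr ⟨((δ : ℤ) : ZMod 5), ((ε : ℤ) : ZMod 5), hεc, hδc, ?_⟩
    · have hfin : ((esymm 3 q : ℤ) : ZMod 5) = 0 := by rw [hcast]; exact hres
      exact_mod_cast (ZMod.intCast_zmod_eq_zero_iff_dvd _ 5).mp hfin
    · rcases h6 (σ 5) with hj | hj | hj | hj | hj | hj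
      · exact Or.inl ⟨hj ▸ hrj, hall 1 (by rw [hj]; decide), hall 2 (by rw [hj]; decide), hall 3 (by rw [hj]; decide), hall 4 (by rw [hj]; decide), hall 5 (by rw [hj]; decide)⟩
      · exact Or.inr (Or.inl ⟨hj ▸ hrj, hall 0 (by rw [hj]; decide), hall 2 (by rw [hj]; decide), hall 3 (by rw [hj]; decide), hall 4 (by rw [hj]; decide), hall 5 (by rw [hj]; decide)⟩)
      · exact Or.inr (Or.inr (Or.inl ⟨hj ▸ hrj, hall 0 (by rw [hj]; decide), hall 1 (by rw [hj]; decide), hall 3 (by rw [hj]; decide), hall 4 (by rw [hj]; decide), hall 5 (by rw [hj]; decide)⟩))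
      · exact Or.inr (Or.inr (Or.inr (Or.inl ⟨hj ▸ hrj, hall 0 (by rw [hj]; decide), hall 1 (by rw [hj]; decide), hall 2 (by rw [hj]; decide), hall 4 (by rw [hj]; decide), hall 5 (by rw [hj]; decide)⟩)))
      · exact Or.inr (Or.inr (Or.inr (Or.inr (Or.inl ⟨hj ▸ hrj, hall 0 (by rw [hj]; decide), hall 1 (by rw [hj]; decide), hall 2 (by rw [hj]; decide), hall 3 (by rw [hj]; decide), hall 5 (by rw [hj]; decide)⟩))))
      · exact Or.inr (Or.inr (Or.inr (Or.inr (Or.inr (⟨hj ▸ hrj, hall 0 (by rw [hj]; decide), hall 1 (by rw [hj]; decide), hall 2 (by rw [hj]; decide), hall 3 (by rw [hj]; decide), hall 4 (by rw [hj]; decide)⟩)))))
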